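/- Let φ : A → A' be an ℓ-isogeny of principally polarized abelian surfaces over ℂ, realized as the identity map on ℂ² inducing A(τ) → A(τ/ℓ) for some τ ∈ ℍ₂, with curve equations C, C' encoding bases of differentials via pullback matrices r, r' ∈ GL₂(ℂ) (so dφ = r′ᵗ r⁻ᵗ). Suppose the modular equations satisfy Ψ_{ℓ,n}(j(τ), j(τ/ℓ)) = 0 for n = 1,2,3 identically in τ, and that D_τJ(A,ω) = D_τJ(τ)·Sym²(rᵗ) for any basis ω with pullback matrix r. Then differentiating yields D Ψ_{ℓ,L}(j,j′)·D_τJ(τ) + (1/ℓ) DΨ_{ℓ,R}(j,j′)·D_τJ(τ/ℓ) = 0, and hence Sym²(dφ) = −ℓ · D_τJ(C′)⁻¹ · DΨ_{ℓ,R}(j,j′)⁻¹ · DΨ_{ℓ,L}(j,j′) · D_τJ(C), provided all four matrices DΨ_{ℓ,L}(j,j′), DΨ_{ℓ,R}(j,j′), D_τJ(C), D_τJ(C′) are invertible. -/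

import Mathlib

open Matrix Complex

/-- The matrix of `Sym²(r)` in the basis `(x²,x,1)` for `r = [[a,b],[c,d]]`. -/
def sym2M (r : Matrix (Fin 2) (Fin 2) ℂ) : Matrix (Fin 3) (Fin 3) ℂ :=
  ![![r 0 0 ^ 2, r 0 0 * r 0 1, r 0 1 ^ 2],
    ![2 * r 0 0 * r 1 0, r 0 0 * r 1 1 + r 0 1 * r 1 0, 2 * r 0 1 * r 1 1],
    ![r 1 0 ^ 2, r 1 0 * r 1 1, r 1 1 ^ 2]]

private lemma sym2M_mul (a b : Matrix (Fin 2) (Fin 2) ℂ) :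
    sym2M (a * b) = sym2M a * sym2M b := by
  ext i j
  simp only [Matrix.mul_apply, Fin.sum_univ_succ]
  fin_cases i <;> fin_cases j <;>
    simp [sym2M, Matrix.mul_apply, Fin.sum_univ_succ] <;> ring

private lemma sym2M_one : sym2M 1 = 1 := by
  ext i j; fin_cases i <;> fin_cases j <;>
    simp [sym2M, Matrix.one_fin_two, Matrix.one_apply, Matrix.vecHead, Matrix.vecTail]

private lemma sym2M_det (a : Matrix (Fin 2) (Fin 2) ℂ) : (sym2M a).det = a.det ^ 3 := by
  rw [Matrix.det_fin_three]
  simp [sym2M, Matrix.det_fin_two]; ring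

private lemma sym2M_inv (a : Matrix (Fin 2) (Fin 2) ℂ) (ha : IsUnit a.det) :
    sym2M a⁻¹ = (sym2M a)⁻¹ :=
  (Matrix.inv_eq_right_inv (by rw [← sym2M_mul, Matrix.mul_nonsing_inv a ha, sym2M_one])).symm

private lemma clm_sum (T : (Fin 3 → ℂ) →L[ℂ] ℂ) (u : Fin 3 → ℂ) :
    T u = ∑ i, u i * T (Pi.single i 1) := by
  have hu : u = ∑ i, u i • (Pi.single i (1:ℂ) : Fin 3 → ℂ) := by
    rw [← Finset.univ_sum_single u]
    congr 1; funext i; rw [← Pi.single_smul]; simp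
  conv_lhs => rw [hu]
  rw [map_sum]
  simp [smul_eq_mul]

theorem stmt_17 (ℓ : ℕ) (hℓ : Nat.Prime ℓ)
    (jfun : (Fin 3 → ℂ) → (Fin 3 → ℂ))
    (Ψ : Fin 3 → ((Fin 3 → ℂ) × (Fin 3 → ℂ)) → ℂ)
    (hjdiff : ∀ kk : Fin 3, Differentiable ℂ fun q => jfun q kk)
    (hΨdiff : ∀ n : Fin 3, Differentiable ℂ (Ψ n))
    (hmodeq : ∀ (q : Fin 3 → ℂ) (n : Fin 3), Ψ n (jfun q, jfun fun i => q i / ℓ) = 0)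
    (p : Fin 3 → ℂ)
    (r r' : Matrix (Fin 2) (Fin 2) ℂ) (hr : IsUnit r.det) (hr' : IsUnit r'.det) :
    let sdiv : (Fin 3 → ℂ) → Fin 3 → ℂ := fun q i => q i / ℓ
    let Jmat : (Fin 3 → ℂ) → Matrix (Fin 3) (Fin 3) ℂ := fun q =>
      Matrix.of fun kk l =>
        (1 / (2 * (Real.pi : ℂ) * Complex.I)) *
          fderiv ℂ (fun w => jfun w kk) q (Pi.single l 1) * (if l = 1 then 1 else 2)
    let DL : Matrix (Fin 3) (Fin 3) ℂ := Matrix.of fun n kk =>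
      fderiv ℂ (fun x => Ψ n (x, jfun (sdiv p))) (jfun p) (Pi.single kk 1)
    let DR : Matrix (Fin 3) (Fin 3) ℂ := Matrix.of fun n kk =>
      fderiv ℂ (fun y => Ψ n (jfun p, y)) (jfun (sdiv p)) (Pi.single kk 1)
    -- `D_τJ(C)` and `D_τJ(C')`, defined by `D_τJ(τ) = D_τJ(C)·Sym²(rᵗ)`
    let DJC : Matrix (Fin 3) (Fin 3) ℂ := Jmat p * (sym2M rᵀ)⁻¹
    let DJC' : Matrix (Fin 3) (Fin 3) ℂ := Jmat (sdiv p) * (sym2M r'ᵀ)⁻¹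
    let dφ : Matrix (Fin 2) (Fin 2) ℂ := r'ᵀ * (rᵀ)⁻¹
    (DL * Jmat p + ((ℓ : ℂ))⁻¹ • (DR * Jmat (sdiv p)) = 0) ∧
    (IsUnit DL.det → IsUnit DR.det → IsUnit DJC.det → IsUnit DJC'.det →
      sym2M dφ = (-(ℓ : ℂ)) • (DJC'⁻¹ * DR⁻¹ * DL * DJC)) := by
  intro sdiv Jmat DL DR DJC DJC' dφ
  have hℓ0 : (ℓ : ℂ) ≠ 0 := Nat.cast_ne_zero.mpr hℓ.pos.ne'
  have hj : Differentiable ℂ jfun := differentiable_pi.mpr hjdiff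
  -- derivative of sdiv
  have hsdiv_eq : sdiv = fun q : Fin 3 → ℂ => (ℓ : ℂ)⁻¹ • q := by
    funext q i
    simp [sdiv, div_eq_inv_mul]
  have hsd : ∀ q, HasFDerivAt sdiv
      ((ℓ : ℂ)⁻¹ • ContinuousLinearMap.id ℂ (Fin 3 → ℂ)) q := by
    intro q
    rw [hsdiv_eq]
    exact (hasFDerivAt_id (𝕜 := ℂ) q).fun_const_smul ((ℓ : ℂ)⁻¹)
  set x₀ := jfun p with hx₀
  set y₀ := jfun (sdiv p) with hy₀
  set L : Fin 3 → ((Fin 3 → ℂ) × (Fin 3 → ℂ)) →L[ℂ] ℂ :=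
    fun n => fderiv ℂ (Ψ n) (x₀, y₀) with hL
  set Dp := fderiv ℂ jfun p with hDp
  set Dq := fderiv ℂ jfun (sdiv p) with hDq
  -- the key derivative-of-modular-equation identity
  have key : ∀ (n : Fin 3) (v : Fin 3 → ℂ),
      L n (Dp v, (ℓ : ℂ)⁻¹ • Dq v) = 0 := by
    intro n v
    have hpair : HasFDerivAt (fun q => (jfun q, jfun (sdiv q)))
        (Dp.prod (Dq.comp ((ℓ : ℂ)⁻¹ • ContinuousLinearMap.id ℂ (Fin 3 → ℂ)))) p :=
      (hj p).hasFDerivAt.prodMk (((hj (sdiv p)).hasFDerivAt).comp p (hsd p))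
    have hcomp : HasFDerivAt (fun q => Ψ n (jfun q, jfun (sdiv q)))
        ((L n).comp (Dp.prod (Dq.comp ((ℓ : ℂ)⁻¹ • ContinuousLinearMap.id ℂ (Fin 3 → ℂ))))) p :=
      HasFDerivAt.comp (𝕜 := ℂ) p ((hΨdiff n (x₀, y₀)).hasFDerivAt) hpair
    have hzero : HasFDerivAt (fun q => Ψ n (jfun q, jfun (sdiv q))) (0 : (Fin 3 → ℂ) →L[ℂ] ℂ) p := by
      have : (fun q => Ψ n (jfun q, jfun (sdiv q))) = fun _ => (0 : ℂ) := by
        funext q; exact hmodeq q n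
      rw [this]; exact hasFDerivAt_const (0 : ℂ) p
    have h0 := hcomp.unique hzero
    have := congrArg (fun (T : (Fin 3 → ℂ) →L[ℂ] ℂ) => T v) h0
    simpa using this
  -- left and right partial derivatives as compositions
  have hDLf : ∀ n : Fin 3, fderiv ℂ (fun x => Ψ n (x, y₀)) x₀ =
      (L n).comp (ContinuousLinearMap.inl ℂ (Fin 3 → ℂ) (Fin 3 → ℂ)) := by
    intro n
    exact (((hΨdiff n (x₀, y₀)).hasFDerivAt).comp x₀
      (hasFDerivAt_prodMk_left x₀ y₀)).fderiv
  have hDRf : ∀ n : Fin 3, fderiv ℂ (fun y => Ψ n (x₀, y)) y₀ =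
      (L n).comp (ContinuousLinearMap.inr ℂ (Fin 3 → ℂ) (Fin 3 → ℂ)) := by
    intro n
    exact (((hΨdiff n (x₀, y₀)).hasFDerivAt).comp y₀
      (hasFDerivAt_prodMk_right x₀ y₀)).fderiv
  -- splitting of the key identity
  have key' : ∀ (n : Fin 3) (v : Fin 3 → ℂ),
      ((L n).comp (ContinuousLinearMap.inl ℂ (Fin 3 → ℂ) (Fin 3 → ℂ))) (Dp v) +
      (ℓ : ℂ)⁻¹ * ((L n).comp (ContinuousLinearMap.inr ℂ (Fin 3 → ℂ) (Fin 3 → ℂ))) (Dq v)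
        = 0 := by
    intro n v
    have := key n v
    have hsplit : (Dp v, (ℓ : ℂ)⁻¹ • Dq v)
        = ((Dp v, 0) : (Fin 3 → ℂ) × (Fin 3 → ℂ)) + (ℓ : ℂ)⁻¹ • ((0 : Fin 3 → ℂ), Dq v) := by
      simp [Prod.smul_mk]
    rw [hsplit, map_add, (L n).map_smul] at this
    simpa [smul_eq_mul] using this
  -- fderiv of components vs fderiv of jfun
  have hcompj : ∀ (q v : Fin 3 → ℂ) (kk : Fin 3),
      fderiv ℂ (fun w => jfun w kk) q v = fderiv ℂ jfun q v kk := by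
    intro q v kk
    have : fderiv ℂ jfun q = ContinuousLinearMap.pi
        (fun kk => fderiv ℂ (fun w => jfun w kk) q) :=
      fderiv_pi (fun kk => (hjdiff kk).differentiableAt)
    rw [this]; rfl
  have hsum : ∀ (T : (Fin 3 → ℂ) →L[ℂ] ℂ) (u : Fin 3 → ℂ) (c w : ℂ),
      ∑ kk, T (Pi.single kk 1) * (c * u kk * w) = c * w * T u := by
    intro T u c w
    rw [clm_sum T u, Finset.mul_sum]
    exact Finset.sum_congr rfl (fun kk _ => by ring)
  -- Part 1
  have part1 : DL * Jmat p + ((ℓ : ℂ))⁻¹ • (DR * Jmat (sdiv p)) = 0 := by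
    ext n l
    simp only [Matrix.add_apply, Matrix.smul_apply, Matrix.mul_apply, Matrix.zero_apply,
      smul_eq_mul]
    show (∑ kk, DL n kk * Jmat p kk l) + (ℓ : ℂ)⁻¹ * ∑ kk, DR n kk * Jmat (sdiv p) kk l = 0
    have hDLe : ∀ n kk : Fin 3, DL n kk =
        ((L n).comp (ContinuousLinearMap.inl ℂ (Fin 3 → ℂ) (Fin 3 → ℂ))) (Pi.single kk 1) := by
      intro n kk
      show fderiv ℂ (fun x => Ψ n (x, y₀)) x₀ (Pi.single kk 1) = _
      rw [hDLf n]
    have hDRe : ∀ n kk : Fin 3, DR n kk =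
        ((L n).comp (ContinuousLinearMap.inr ℂ (Fin 3 → ℂ) (Fin 3 → ℂ))) (Pi.single kk 1) := by
      intro n kk
      show fderiv ℂ (fun y => Ψ n (x₀, y)) y₀ (Pi.single kk 1) = _
      rw [hDRf n]
    have hJe : ∀ (q : Fin 3 → ℂ) (kk l : Fin 3), Jmat q kk l =
        (1 / (2 * (Real.pi : ℂ) * Complex.I)) *
          (fderiv ℂ jfun q (Pi.single l 1) kk) * (if l = 1 then 1 else 2) := by
      intro q kk l
      show (1 / (2 * (Real.pi : ℂ) * Complex.I)) *
          fderiv ℂ (fun w => jfun w kk) q (Pi.single l 1) * (if l = 1 then 1 else 2) = _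
      rw [hcompj]
    simp only [hDLe, hDRe, hJe]
    rw [hsum, hsum]
    have := key' n (Pi.single l 1)
    set c := (1 / (2 * (Real.pi : ℂ) * Complex.I))
    set w := (if l = (1 : Fin 3) then (1 : ℂ) else 2)
    linear_combination (c * w) * this
  refine ⟨part1, ?_⟩
  intro h1 h2 h3 h4
  -- Part 2
  have hSdet : IsUnit (sym2M rᵀ).det := by
    rw [sym2M_det, Matrix.det_transpose]; exact hr.pow 3
  have hS'det : IsUnit (sym2M r'ᵀ).det := by
    rw [sym2M_det, Matrix.det_transpose]; exact hr'.pow 3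
  have hrT : IsUnit rᵀ.det := by rwa [Matrix.det_transpose]
  have hJp : Jmat p = DJC * sym2M rᵀ := by
    show Jmat p = (Jmat p * (sym2M rᵀ)⁻¹) * sym2M rᵀ
    rw [Matrix.nonsing_inv_mul_cancel_right _ _ hSdet]
  have hJq : Jmat (sdiv p) = DJC' * sym2M r'ᵀ := by
    show Jmat (sdiv p) = (Jmat (sdiv p) * (sym2M r'ᵀ)⁻¹) * sym2M r'ᵀ
    rw [Matrix.nonsing_inv_mul_cancel_right _ _ hS'det]
  -- rearrange part1
  have hE : DR * (DJC' * sym2M r'ᵀ) = (-(ℓ : ℂ)) • (DL * (DJC * sym2M rᵀ)) := by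
    have h := part1
    rw [hJp, hJq] at h
    have h' : (ℓ : ℂ)⁻¹ • (DR * (DJC' * sym2M r'ᵀ)) = -(DL * (DJC * sym2M rᵀ)) := by
      rw [eq_neg_iff_add_eq_zero, add_comm]; exact h
    calc DR * (DJC' * sym2M r'ᵀ)
        = (ℓ : ℂ) • ((ℓ : ℂ)⁻¹ • (DR * (DJC' * sym2M r'ᵀ))) := by
          rw [smul_smul, mul_inv_cancel₀ hℓ0, one_smul]
      _ = (ℓ : ℂ) • (-(DL * (DJC * sym2M rᵀ))) := by rw [h']
      _ = (-(ℓ : ℂ)) • (DL * (DJC * sym2M rᵀ)) := by rw [smul_neg, neg_smul]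
  have hS' : sym2M r'ᵀ = (-(ℓ : ℂ)) • (DJC'⁻¹ * DR⁻¹ * DL * DJC * sym2M rᵀ) := by
    calc sym2M r'ᵀ = DJC'⁻¹ * (DJC' * sym2M r'ᵀ) := by
          rw [Matrix.nonsing_inv_mul_cancel_left _ _ h4]
      _ = DJC'⁻¹ * (DR⁻¹ * (DR * (DJC' * sym2M r'ᵀ))) := by
          rw [Matrix.nonsing_inv_mul_cancel_left _ _ h2]
      _ = DJC'⁻¹ * (DR⁻¹ * ((-(ℓ : ℂ)) • (DL * (DJC * sym2M rᵀ)))) := by rw [hE]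
      _ = (-(ℓ : ℂ)) • (DJC'⁻¹ * DR⁻¹ * DL * DJC * sym2M rᵀ) := by
          rw [Matrix.mul_smul, Matrix.mul_smul]
          congr 1
          noncomm_ring
  show sym2M (r'ᵀ * (rᵀ)⁻¹) = (-(ℓ : ℂ)) • (DJC'⁻¹ * DR⁻¹ * DL * DJC)
  rw [sym2M_mul, sym2M_inv _ hrT, hS', Matrix.smul_mul,
    Matrix.mul_nonsing_inv_cancel_right _ _ hSdet]
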